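/- For every r ≥ 1, if there exists an r-colouring of the integer interval {1,...,S} with no monochromatic solution to x + y = z and no monochromatic solution to x + y + 1 = z, then there exists an r-colouring of the real interval [1, S+1) with no monochromatic solution to x + y = z. (Namely, colour each real x by the colour of ⌊x⌋.) -/
import Mathlib


theorem stmt_19 (r : ℕ) (hr : 1 ≤ r) (S : ℕ) (ξ : ℕ → Fin r)
    (h : ∀ x ∈ Finset.Icc 1 S, ∀ y ∈ Finset.Icc 1 S, ∀ z ∈ Finset.Icc 1 S,
      ξ x = ξ y → ξ y = ξ z → x + y ≠ z ∧ x + y + 1 ≠ z) :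
    ∃ c : ℝ → Fin r,
      ∀ x ∈ Set.Ico (1 : ℝ) (S + 1), ∀ y ∈ Set.Ico (1 : ℝ) (S + 1),
      ∀ z ∈ Set.Ico (1 : ℝ) (S + 1),
        c x = c y → c y = c z → x + y ≠ z := by
  refine ⟨fun x => ξ (⌊x⌋.toNat), ?_⟩
  intro x hx y hy z hz hxy hyz hsum
  have mem : ∀ w : ℝ, w ∈ Set.Ico (1 : ℝ) (S + 1) →
      1 ≤ ⌊w⌋ ∧ ⌊w⌋ ≤ (S : ℤ) := by
    intro w hw
    constructor
    · exact Int.le_floor.2 (by exact_mod_cast hw.1)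
    · have : ⌊w⌋ < (S : ℤ) + 1 := Int.floor_lt.2 (by exact_mod_cast hw.2)
      omega
  obtain ⟨ha1, ha2⟩ := mem x hx
  obtain ⟨hb1, hb2⟩ := mem y hy
  obtain ⟨hm1, hm2⟩ := mem z hz
  have hlow : ⌊x⌋ + ⌊y⌋ ≤ ⌊z⌋ := by
    rw [← hsum]
    apply Int.le_floor.2
    push_cast
    exact add_le_add (Int.floor_le x) (Int.floor_le y)
  have hhigh : ⌊z⌋ ≤ ⌊x⌋ + ⌊y⌋ + 1 := by
    have : z < (⌊x⌋ : ℝ) + ⌊y⌋ + 2 := by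
      rw [← hsum]
      have := Int.lt_floor_add_one x
      have := Int.lt_floor_add_one y
      linarith
    have := Int.floor_lt.2 (by push_cast; linarith : z < ((⌊x⌋ + ⌊y⌋ + 2 : ℤ) : ℝ))
    omega
  have hmemN : ∀ a : ℤ, 1 ≤ a → a ≤ (S : ℤ) → a.toNat ∈ Finset.Icc 1 S := by
    intro a h1 h2
    simp [Finset.mem_Icc]; omega
  have := h _ (hmemN _ ha1 ha2) _ (hmemN _ hb1 hb2) _ (hmemN _ hm1 hm2) hxy hyz
  omega
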